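/- arXiv:2510.26063 — 5 statements merged into one kernel-verified Lean document; each statement's English description precedes it below -/
import Mathlib

section
/- Let N ≥ 1 and 1 ≤ k ≤ N, and let L : Fin N → ℝ. Then S_k(L), the sum of the k largest values of L, equals the minimum over all t ∈ ℝ and λ : Fin N → ℝ satisfying λ_i ≥ L_i − t and λ_i ≥ 0 for every i, of the quantity k·t + Σ_{i} λ_i; that is, S_k(L) = min { k·t + Σ_i λ_i : t ∈ ℝ, λ_i ≥ max(L_i − t, 0) for all i }, and this minimum is attained. -/
open Finset

/-- The values of `L : Fin N → ℝ` rearranged in nonincreasing order. -/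
noncomputable def sortedDesc {N : ℕ} (L : Fin N → ℝ) : Fin N → ℝ :=
  fun j => L (Tuple.sort L j.rev)

/-- The `k`-th largest value (with `k` 1-indexed) of `L : Fin N → ℝ`. -/
noncomputable def kthLargest {N : ℕ} (L : Fin N → ℝ) (k : ℕ) (h : k - 1 < N) : ℝ :=
  sortedDesc L ⟨k - 1, h⟩

/-- The sum of the `k` largest values of `L : Fin N → ℝ`. -/
noncomputable def sumKLargest {N : ℕ} (L : Fin N → ℝ) (k : ℕ) : ℝ :=
  ∑ j ∈ Finset.univ.filter (fun j : Fin N => (j : ℕ) < k), sortedDesc L j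

lemma sortedDesc_antitone {N : ℕ} (L : Fin N → ℝ) : Antitone (sortedDesc L) := by
  intro a b hab
  exact Tuple.monotone_sort L (Fin.rev_le_rev.mpr hab)

lemma sum_comp_sortedDesc {N : ℕ} (L : Fin N → ℝ) (f : ℝ → ℝ) :
    ∑ j, f (sortedDesc L j) = ∑ i, f (L i) := by
  exact Fintype.sum_equiv (Fin.revPerm.trans (Tuple.sort L)) _ _ (fun j => rfl)

lemma card_filter_lt {N k : ℕ} (hkN : k ≤ N) :
    (Finset.univ.filter (fun j : Fin N => (j : ℕ) < k)).card = k := by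
  rw [← Finset.card_range k]
  apply Finset.card_bij (fun (a : Fin N) _ => a.val)
  · intro a ha; simp at ha ⊢; exact ha
  · intro a _ b _ h; exact Fin.ext h
  · intro b hb; simp at hb
    exact ⟨⟨b, lt_of_lt_of_le hb hkN⟩, by simp [hb], rfl⟩

/-- Ogryczak–Tamir: the sum of the `k` largest values of `L` is the
minimum, over all `t : ℝ` and `lam : Fin N → ℝ` with `lam i ≥ L i - t` and `lam i ≥ 0`
for every `i`, of `k * t + ∑ i, lam i`; and this minimum is attained. -/
theorem sumKLargest_isLeast (N k : ℕ) (hN : 1 ≤ N) (hk1 : 1 ≤ k) (hkN : k ≤ N)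
    (L : Fin N → ℝ) :
    IsLeast { x : ℝ | ∃ (t : ℝ) (lam : Fin N → ℝ),
        (∀ i, lam i ≥ L i - t) ∧ (∀ i, lam i ≥ 0) ∧ x = (k : ℝ) * t + ∑ i, lam i }
      (sumKLargest L k) := by
  have hk1N : k - 1 < N := lt_of_lt_of_le (Nat.sub_lt hk1 one_pos) hkN
  set t₀ : ℝ := sortedDesc L ⟨k - 1, hk1N⟩ with ht₀
  have hcard := card_filter_lt (N := N) hkN
  have hsum_split : ∀ t : ℝ, ∑ i, max (L i - t) 0
      ≥ ∑ j ∈ Finset.univ.filter (fun j : Fin N => (j : ℕ) < k), (sortedDesc L j - t) := by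
    intro t
    rw [← sum_comp_sortedDesc L (fun x => max (x - t) 0)]
    calc ∑ j ∈ Finset.univ.filter (fun j : Fin N => (j : ℕ) < k), (sortedDesc L j - t)
        ≤ ∑ j ∈ Finset.univ.filter (fun j : Fin N => (j : ℕ) < k), max (sortedDesc L j - t) 0 :=
          Finset.sum_le_sum (fun j _ => le_max_left _ _)
      _ ≤ ∑ j, max (sortedDesc L j - t) 0 :=
          Finset.sum_le_sum_of_subset_of_nonneg (Finset.filter_subset _ _)
            (fun j _ _ => le_max_right _ _)
  have key : ∀ t : ℝ, sumKLargest L k ≤ (k : ℝ) * t + ∑ i, max (L i - t) 0 := by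
    intro t
    have h1 := hsum_split t
    have h2 : ∑ j ∈ Finset.univ.filter (fun j : Fin N => (j : ℕ) < k), (sortedDesc L j - t)
        = sumKLargest L k - (k : ℝ) * t := by
      rw [Finset.sum_sub_distrib, Finset.sum_const, hcard, sumKLargest, nsmul_eq_mul]
    linarith
  constructor
  · refine ⟨t₀, fun i => max (L i - t₀) 0, fun i => le_max_left _ _, fun i => le_max_right _ _, ?_⟩
    have hmax : ∀ j : Fin N, max (sortedDesc L j - t₀) 0
        = if (j : ℕ) < k then sortedDesc L j - t₀ else 0 := by
      intro j
      split
      · next h =>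
        have : t₀ ≤ sortedDesc L j := by
          apply sortedDesc_antitone L
          exact Fin.mk_le_mk.mpr (Nat.le_sub_one_of_lt h)
        simp [max_eq_left, sub_nonneg.mpr this]
      · next h =>
        have : sortedDesc L j ≤ t₀ := by
          apply sortedDesc_antitone L
          exact Fin.mk_le_mk.mpr (Nat.sub_le_of_le_add (by omega))
        simp [max_eq_right, sub_nonpos.mpr this]
    have : ∑ i, max (L i - t₀) 0 = sumKLargest L k - (k : ℝ) * t₀ := by
      rw [← sum_comp_sortedDesc L (fun x => max (x - t₀) 0)]
      simp only [hmax]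
      rw [Finset.sum_ite, Finset.sum_const_zero, add_zero, Finset.sum_sub_distrib,
        Finset.sum_const, hcard, nsmul_eq_mul, sumKLargest]
    rw [this]; ring
  · rintro x ⟨t, lam, hge, hnn, rfl⟩
    have : ∑ i, max (L i - t) 0 ≤ ∑ i, lam i :=
      Finset.sum_le_sum (fun i _ => max_le (hge i) (hnn i))
    have := key t
    linarith
end

section
/- Let N ≥ 1 and 1 ≤ k ≤ N, let L : Fin N → ℝ, and let t ∈ ℝ and λ : Fin N → ℝ satisfy λ_i ≥ L_i − t and λ_i ≥ 0 for every i. Then k·t + Σ_i λ_i ≥ S_k(L), the sum of the k largest values of L. In particular, for any such feasible pair (t, λ), the quantity (1/k)(k·t + Σ_i λ_i) is an upper bound on the empirical expected shortfall EES_{1−k/N}(L) = S_k(L)/k. -/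
open Finset

/-- any feasible pair `(t, lam)` (i.e. `lam i ≥ L i - t`, `lam i ≥ 0`)
gives `k * t + ∑ i, lam i ≥ S_k(L)`, and hence `(1/k) * (k * t + ∑ i, lam i)` is an
upper bound on the empirical expected shortfall `EES = S_k(L) / k`. -/
theorem feasible_ge_sumKLargest (N k : ℕ) (hN : 1 ≤ N) (hk1 : 1 ≤ k) (hkN : k ≤ N)
    (L : Fin N → ℝ) (t : ℝ) (lam : Fin N → ℝ)
    (h1 : ∀ i, lam i ≥ L i - t) (h2 : ∀ i, lam i ≥ 0) :
    (k : ℝ) * t + ∑ i, lam i ≥ sumKLargest L k ∧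
      (1 / (k : ℝ)) * ((k : ℝ) * t + ∑ i, lam i) ≥ sumKLargest L k / k := by
  have hkpos : (0:ℝ) < k := by exact_mod_cast hk1
  set T := Finset.univ.filter (fun j : Fin N => (j : ℕ) < k) with hT
  have hinj : Function.Injective (fun j : Fin N => Tuple.sort L j.rev) := by
    intro a b hab
    have := (Tuple.sort L).injective hab
    exact Fin.rev_injective this
  set S := T.image (fun j => Tuple.sort L j.rev) with hS
  have hsum : sumKLargest L k = ∑ i ∈ S, L i := by
    rw [hS, Finset.sum_image (fun a _ b _ h => hinj h)]
    rfl
  have hcardT : T.card = k := by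
    rw [hT]
    have : Finset.univ.filter (fun j : Fin N => (j : ℕ) < k)
        = Finset.map (Fin.castLEEmb hkN) Finset.univ := by
      ext j
      simp only [Finset.mem_filter, Finset.mem_univ, true_and, Finset.mem_map]
      constructor
      · intro hj
        exact ⟨⟨j, hj⟩, rfl⟩
      · rintro ⟨i, -, rfl⟩
        exact i.2
    rw [this, Finset.card_map, Finset.card_univ, Fintype.card_fin]
  have hcardS : S.card = k := by
    rw [hS, Finset.card_image_of_injective _ hinj, hcardT]
  have key : sumKLargest L k ≤ (k:ℝ) * t + ∑ i, lam i := by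
    rw [hsum]
    calc ∑ i ∈ S, L i ≤ ∑ i ∈ S, (t + lam i) := by
          apply Finset.sum_le_sum
          intro i _
          have := h1 i
          linarith
      _ = (k:ℝ) * t + ∑ i ∈ S, lam i := by
          rw [Finset.sum_add_distrib, Finset.sum_const, hcardS, nsmul_eq_mul]
      _ ≤ (k:ℝ) * t + ∑ i, lam i := by
          have := Finset.sum_le_sum_of_subset_of_nonneg (Finset.subset_univ S)
            (fun i _ _ => h2 i)
          linarith
  refine ⟨key, ?_⟩
  rw [ge_iff_le, div_le_iff₀ hkpos, one_div, mul_comm ((k:ℝ)⁻¹) _, mul_assoc,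
    inv_mul_cancel₀ (ne_of_gt hkpos), mul_one]
  exact key
end

section
/- Let N ≥ 1 and 1 ≤ k ≤ N, let L : Fin N → ℝ and M ∈ ℝ. Then EES_{1−k/N}(L) ≤ M if and only if there exist t ∈ ℝ and λ : Fin N → ℝ with λ_i ≥ L_i − t and λ_i ≥ 0 for every i, such that (1/k)(k·t + Σ_i λ_i) ≤ M. -/
open Finset

lemma sortedDesc_eq_comp {N : ℕ} (L : Fin N → ℝ) :
    sortedDesc L = L ∘ (Fin.revPerm.trans (Tuple.sort L)) := rfl

/-- `EES_{1-k/N}(L) = S_k(L)/k ≤ M` iff there exist `t : ℝ` and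
`lam : Fin N → ℝ` with `lam i ≥ L i - t` and `lam i ≥ 0` for every `i` such that
`(1/k) * (k * t + ∑ i, lam i) ≤ M`. -/
theorem EES_le_iff_exists_feasible (N k : ℕ) (hN : 1 ≤ N) (hk1 : 1 ≤ k) (hkN : k ≤ N)
    (L : Fin N → ℝ) (M : ℝ) :
    sumKLargest L k / k ≤ M ↔
      ∃ (t : ℝ) (lam : Fin N → ℝ),
        (∀ i, lam i ≥ L i - t) ∧ (∀ i, lam i ≥ 0) ∧
          (1 / (k : ℝ)) * ((k : ℝ) * t + ∑ i, lam i) ≤ M := by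
  have hkpos : (0 : ℝ) < k := by exact_mod_cast hk1
  set e : Fin N ≃ Fin N := Fin.revPerm.trans (Tuple.sort L) with he
  have hkm1 : k - 1 < N := lt_of_lt_of_le (Nat.sub_lt hk1 one_pos) hkN
  set A : Finset (Fin N) := Finset.univ.filter (fun j : Fin N => (j : ℕ) < k) with hA
  have hcardA : A.card = k := by
    rw [hA]
    have : Finset.univ.filter (fun j : Fin N => (j : ℕ) < k)
        = (Finset.range k).attachFin (fun m hm => lt_of_lt_of_le (Finset.mem_range.mp hm) hkN) := by
      ext j; simp
    rw [this, Finset.card_attachFin, Finset.card_range]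
  constructor
  · intro hM
    set t : ℝ := sortedDesc L ⟨k - 1, hkm1⟩ with ht
    refine ⟨t, fun i => max (L i - t) 0, fun i => le_max_left _ _, fun i => le_max_right _ _, ?_⟩
    have hsum : ∑ i, max (L i - t) 0 = ∑ j, max (sortedDesc L j - t) 0 := by
      rw [sortedDesc_eq_comp]
      exact (Equiv.sum_comp e (fun i => max (L i - t) 0)).symm
    have hsplit : ∑ j, max (sortedDesc L j - t) 0 = sumKLargest L k - k * t := by
      rw [← Finset.sum_filter_add_sum_filter_not Finset.univ (fun j : Fin N => (j : ℕ) < k)]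
      have h1 : ∀ j ∈ A, max (sortedDesc L j - t) 0 = sortedDesc L j - t := by
        intro j hj
        rw [hA, Finset.mem_filter] at hj
        have hle : j ≤ (⟨k - 1, hkm1⟩ : Fin N) := by
          simp [Fin.le_def]; omega
        have := sortedDesc_antitone L hle
        rw [max_eq_left]; linarith
      have h2 : ∀ j ∈ Finset.univ.filter (fun j : Fin N => ¬ (j : ℕ) < k),
          max (sortedDesc L j - t) 0 = 0 := by
        intro j hj
        rw [Finset.mem_filter] at hj
        have hle : (⟨k - 1, hkm1⟩ : Fin N) ≤ j := by
          simp [Fin.le_def]; omega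
        have := sortedDesc_antitone L hle
        rw [max_eq_right]; linarith
      rw [Finset.sum_congr rfl h1, Finset.sum_congr rfl h2, Finset.sum_const_zero, add_zero,
        Finset.sum_sub_distrib, Finset.sum_const, hcardA, nsmul_eq_mul, sumKLargest, ← hA]
    rw [hsum, hsplit]
    rw [div_le_iff₀ hkpos] at hM
    rw [show (k:ℝ) * t + (sumKLargest L k - k * t) = sumKLargest L k by ring]
    rw [one_div, inv_mul_le_iff₀ hkpos]
    linarith
  · rintro ⟨t, lam, h1, h2, h3⟩
    have key : sumKLargest L k ≤ k * t + ∑ i, lam i := by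
      have : sumKLargest L k ≤ ∑ j ∈ A, (t + lam (e j)) := by
        apply Finset.sum_le_sum
        intro j _
        have := h1 (e j)
        have : sortedDesc L j = L (e j) := rfl
        rw [this]
        have := h1 (e j)
        linarith
      rw [Finset.sum_add_distrib, Finset.sum_const, hcardA] at this
      have himg : ∑ j ∈ A, lam (e j) ≤ ∑ i, lam i :=
        calc ∑ j ∈ A, lam (e j) = ∑ x ∈ A.map e.toEmbedding, lam x :=
              (Finset.sum_map A e.toEmbedding lam).symm
          _ ≤ ∑ i, lam i := Finset.sum_le_sum_of_subset_of_nonneg (Finset.subset_univ _)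
              (fun i _ _ => h2 i)
      rw [nsmul_eq_mul] at this
      linarith
    rw [div_le_iff₀ hkpos]
    rw [one_div, inv_mul_le_iff₀ hkpos] at h3
    linarith
end

section
/- Let m ≥ 1 be an integer, let k be an integer with 0 ≤ k ≤ m − 1, and let β ∈ (0,1). The equation C(m,k) t^{m−k} − (β/(2m)) Σ_{i=k}^{m−1} C(i,k) t^{i−k} − (β/(6m)) Σ_{i=m+1}^{4m} C(i,k) t^{i−k} = 0 has exactly two solutions in [0, +∞); that is, the set of nonnegative zeros of this polynomial in t has cardinality two. -/
open Finset


noncomputable def eqF (m k : ℕ) (β : ℝ) (t : ℝ) : ℝ :=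
  (m.choose k : ℝ) * t ^ (m - k)
    - (β / (2 * m)) * ∑ i ∈ Finset.Icc k (m - 1), (i.choose k : ℝ) * t ^ (i - k)
    - (β / (6 * m)) * ∑ i ∈ Finset.Icc (m + 1) (4 * m), (i.choose k : ℝ) * t ^ (i - k)

noncomputable def Zfun (m k : ℕ) (β : ℝ) (t : ℝ) : ℝ :=
  (β / (2 * m)) * ∑ i ∈ Finset.Icc k (m - 1), (i.choose k : ℝ) * t ^ ((i : ℤ) - (m : ℤ))
    + (β / (6 * m)) * ∑ i ∈ Finset.Icc (m + 1) (4 * m), (i.choose k : ℝ) * t ^ ((i : ℤ) - (m : ℤ))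

lemma continuous_eqF (m k : ℕ) (β : ℝ) : Continuous (eqF m k β) := by
  unfold eqF
  apply Continuous.sub
  apply Continuous.sub
  · exact continuous_const.mul (continuous_pow _)
  · exact continuous_const.mul (continuous_finset_sum _
      (fun i _ => continuous_const.mul (continuous_pow _)))
  · exact continuous_const.mul (continuous_finset_sum _
      (fun i _ => continuous_const.mul (continuous_pow _)))

lemma eqF_factor (m k : ℕ) (hk : k < m) (β : ℝ) {t : ℝ} (ht : 0 < t) :
    eqF m k β t = t ^ (m - k) * ((m.choose k : ℝ) - Zfun m k β t) := by
  have htne : t ≠ 0 := ne_of_gt ht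
  have key : ∀ i : ℕ, k ≤ i → t ^ (i - k) = t ^ (m - k) * t ^ ((i : ℤ) - (m : ℤ)) := by
    intro i hi
    rw [← zpow_natCast t (m - k), ← zpow_add₀ htne, ← zpow_natCast t (i - k)]
    congr 1
    omega
  have hs1 : ∑ i ∈ Finset.Icc k (m - 1), (i.choose k : ℝ) * t ^ (i - k)
      = t ^ (m - k) * ∑ i ∈ Finset.Icc k (m - 1), (i.choose k : ℝ) * t ^ ((i : ℤ) - (m : ℤ)) := by
    rw [Finset.mul_sum]
    refine Finset.sum_congr rfl fun i hi => ?_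
    rw [key i (Finset.mem_Icc.mp hi).1]; ring
  have hs2 : ∑ i ∈ Finset.Icc (m + 1) (4 * m), (i.choose k : ℝ) * t ^ (i - k)
      = t ^ (m - k) * ∑ i ∈ Finset.Icc (m + 1) (4 * m), (i.choose k : ℝ) * t ^ ((i : ℤ) - (m : ℤ)) := by
    rw [Finset.mul_sum]
    refine Finset.sum_congr rfl fun i hi => ?_
    have hik : k ≤ i := by have := (Finset.mem_Icc.mp hi).1; omega
    rw [key i hik]; ring
  unfold eqF Zfun
  rw [hs1, hs2]; ring

private lemma strictConvexOn_const_mul {f : ℝ → ℝ} {c : ℝ} (hc : 0 < c)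
    (hf : StrictConvexOn ℝ (Set.Ioi 0) f) :
    StrictConvexOn ℝ (Set.Ioi 0) (fun x => c * f x) := by
  refine ⟨hf.1, fun x hx y hy hxy a b ha hb hab => ?_⟩
  have h := hf.2 hx hy hxy ha hb hab
  simp only [smul_eq_mul] at h ⊢
  nlinarith [mul_lt_mul_of_pos_left h hc]

private lemma convexOn_zpow_sum (w : ℕ → ℝ) (e : ℕ → ℤ) :
    ∀ s : Finset ℕ, (∀ i ∈ s, 0 ≤ w i) →
    ConvexOn ℝ (Set.Ioi 0) (fun t : ℝ => ∑ i ∈ s, w i * t ^ (e i)) := by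
  classical
  intro s
  induction s using Finset.induction_on with
  | empty => intro _; simpa using convexOn_const (0 : ℝ) (convex_Ioi 0)
  | @insert a s ha ih =>
      intro hw
      have h1 : ConvexOn ℝ (Set.Ioi 0) (fun t : ℝ => w a * t ^ (e a)) := by
        simpa [smul_eq_mul] using
          (convexOn_zpow (e a)).smul (hw a (Finset.mem_insert_self a s))
      have h2 := ih (fun i hi => hw i (Finset.mem_insert_of_mem hi))
      have heq : (fun t : ℝ => ∑ i ∈ insert a s, w i * t ^ (e i))
          = (fun t : ℝ => w a * t ^ (e a)) + (fun t : ℝ => ∑ i ∈ s, w i * t ^ (e i)) := by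
        funext t; simp [Finset.sum_insert ha]
      rw [heq]
      exact h1.add h2

private lemma strictConvexOn_zpow_sum (w : ℕ → ℝ) (e : ℕ → ℤ) (s : Finset ℕ)
    (hw : ∀ i ∈ s, 0 ≤ w i) (j : ℕ) (hj : j ∈ s) (hwj : 0 < w j)
    (hej0 : e j ≠ 0) (hej1 : e j ≠ 1) :
    StrictConvexOn ℝ (Set.Ioi 0) (fun t : ℝ => ∑ i ∈ s, w i * t ^ (e i)) := by
  classical
  have heq : (fun t : ℝ => ∑ i ∈ s, w i * t ^ (e i))
      = (fun t : ℝ => w j * t ^ (e j)) + (fun t : ℝ => ∑ i ∈ s.erase j, w i * t ^ (e i)) := by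
    funext t
    simp only [Pi.add_apply]
    rw [← Finset.add_sum_erase _ _ hj]
  rw [heq]
  exact (strictConvexOn_const_mul hwj (strictConvexOn_zpow hej0 hej1)).add_convexOn
    (convexOn_zpow_sum w e (s.erase j) (fun i hi => hw i (Finset.mem_of_mem_erase hi)))

private lemma no_three_zeros {Z : ℝ → ℝ} (hZ : StrictConvexOn ℝ (Set.Ioi 0) Z) {c x y z : ℝ}
    (hx : 0 < x) (hxy : x < y) (hyz : y < z)
    (h1 : Z x = c) (h2 : Z y = c) (h3 : Z z = c) : False := by
  have hz : 0 < z := by linarith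
  have hxz : x ≠ z := by intro h; rw [h] at hxy; linarith
  have hzx : (0:ℝ) < z - x := by linarith
  have ha : 0 < (z - y) / (z - x) := div_pos (by linarith) hzx
  have hb : 0 < (y - x) / (z - x) := div_pos (by linarith) hzx
  have hab : (z - y) / (z - x) + (y - x) / (z - x) = 1 := by field_simp; ring
  have hcomb : ((z - y) / (z - x)) • x + ((y - x) / (z - x)) • z = y := by
    simp only [smul_eq_mul]
    field_simp
    ring
  have hlt := hZ.2 (Set.mem_Ioi.mpr hx) (Set.mem_Ioi.mpr hz) hxz ha hb hab
  rw [hcomb, h1, h2, h3] at hlt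
  simp only [smul_eq_mul] at hlt
  have : (z - y) / (z - x) * c + (y - x) / (z - x) * c = c := by
    rw [← add_mul, hab, one_mul]
  linarith

lemma eqF_zero (m k : ℕ) (hm : 1 ≤ m) (hk : k < m) (β : ℝ) :
    eqF m k β 0 = -(β / (2 * m)) := by
  unfold eqF
  have h1 : (0:ℝ) ^ (m - k) = 0 := zero_pow (by omega)
  have h2 : ∑ i ∈ Finset.Icc k (m - 1), (i.choose k : ℝ) * (0:ℝ) ^ (i - k) = 1 := by
    rw [Finset.sum_eq_single_of_mem k (Finset.mem_Icc.mpr ⟨le_refl k, by omega⟩)]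
    · simp
    · intro i hi hne
      have hik : k ≤ i := (Finset.mem_Icc.mp hi).1
      rw [zero_pow (by omega)]; ring
  have h3 : ∑ i ∈ Finset.Icc (m + 1) (4 * m), (i.choose k : ℝ) * (0:ℝ) ^ (i - k) = 0 := by
    refine Finset.sum_eq_zero fun i hi => ?_
    have := (Finset.mem_Icc.mp hi).1
    rw [zero_pow (by omega)]; ring
  rw [h1, h2, h3]; ring

lemma eqF_t0_pos (m k : ℕ) (hm : 1 ≤ m) (hk : k < m) {β : ℝ} (hβ0 : 0 < β) (hβ1 : β < 1) :
    0 < eqF m k β (((m : ℝ) + 1 - k) / ((m : ℝ) + 1)) := by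
  set t0 : ℝ := ((m : ℝ) + 1 - k) / ((m : ℝ) + 1) with ht0def
  have hkR : (k : ℝ) < m := by exact_mod_cast hk
  have hmR : (0:ℝ) < m := by exact_mod_cast hm
  have hden : (0:ℝ) < (m : ℝ) + 1 := by linarith
  have hnum : (0:ℝ) < (m : ℝ) + 1 - k := by linarith
  have ht0 : 0 < t0 := div_pos hnum hden
  set c : ℕ → ℝ := fun i => (i.choose k : ℝ) * t0 ^ i with hcdef
  have idr' : ∀ i : ℕ, k ≤ i → ((i.choose k : ℝ)) * ((i:ℝ) + 1)
      = (((i+1).choose k : ℝ)) * ((i:ℝ) + 1 - k) := by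
    intro i hi
    have h := Nat.choose_mul_succ_eq i k
    have h2 : ((i.choose k * (i + 1) : ℕ) : ℝ) = (((i + 1).choose k * (i + 1 - k) : ℕ) : ℝ) := by
      exact_mod_cast congrArg (Nat.cast : ℕ → ℝ) h
    push_cast [Nat.cast_sub (show k ≤ i + 1 by omega)] at h2
    linarith [h2]
  have step_up : ∀ i : ℕ, k ≤ i → i < m → c i ≤ c (i + 1) := by
    intro i hki him
    have hiR : (i : ℝ) + 1 ≤ m := by exact_mod_cast Nat.succ_le_of_lt him
    have hkiR : (k : ℝ) ≤ i := by exact_mod_cast hki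
    have hAnn : (0:ℝ) ≤ (i.choose k : ℝ) := Nat.cast_nonneg _
    have hid := idr' i hki
    have hik1 : (0:ℝ) < (i:ℝ) + 1 - k := by linarith
    have hprod : (0:ℝ) ≤ (i.choose k : ℝ) * k * ((m:ℝ) - i) := by
      apply mul_nonneg (mul_nonneg hAnn (Nat.cast_nonneg _)); linarith
    have h5 : (i.choose k : ℝ) * ((m:ℝ) + 1) * ((i:ℝ) + 1 - k)
        ≤ ((i+1).choose k : ℝ) * ((m:ℝ) + 1 - k) * ((i:ℝ) + 1 - k) := by
      nlinarith [hid, hprod]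
    have h6 : (i.choose k : ℝ) * ((m:ℝ) + 1) ≤ ((i+1).choose k : ℝ) * ((m:ℝ) + 1 - k) :=
      le_of_mul_le_mul_right h5 hik1
    have h7 : (i.choose k : ℝ) ≤ ((i+1).choose k : ℝ) * t0 := by
      rw [ht0def, ← mul_div_assoc, le_div_iff₀ hden]
      linarith [h6]
    calc c i = (i.choose k : ℝ) * t0 ^ i := rfl
      _ ≤ (((i+1).choose k : ℝ) * t0) * t0 ^ i :=
          mul_le_mul_of_nonneg_right h7 (pow_nonneg ht0.le i)
      _ = c (i + 1) := by simp only [hcdef, pow_succ]; ring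
  have step_dn : ∀ i : ℕ, m ≤ i → c (i + 1) ≤ c i := by
    intro i him
    have hki : k ≤ i := le_trans hk.le him
    have hiR : (m : ℝ) ≤ i := by exact_mod_cast him
    have hkiR : (k : ℝ) ≤ i := by exact_mod_cast hki
    have hAnn : (0:ℝ) ≤ (i.choose k : ℝ) := Nat.cast_nonneg _
    have hid := idr' i hki
    have hik1 : (0:ℝ) < (i:ℝ) + 1 - k := by linarith
    have hprod : (0:ℝ) ≤ (i.choose k : ℝ) * k * ((i:ℝ) - m) := by
      apply mul_nonneg (mul_nonneg hAnn (Nat.cast_nonneg _)); linarith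
    have h5 : ((i+1).choose k : ℝ) * ((m:ℝ) + 1 - k) * ((i:ℝ) + 1 - k)
        ≤ (i.choose k : ℝ) * ((m:ℝ) + 1) * ((i:ℝ) + 1 - k) := by
      nlinarith [hid, hprod]
    have h6 : ((i+1).choose k : ℝ) * ((m:ℝ) + 1 - k) ≤ (i.choose k : ℝ) * ((m:ℝ) + 1) :=
      le_of_mul_le_mul_right h5 hik1
    have h7 : ((i+1).choose k : ℝ) * t0 ≤ (i.choose k : ℝ) := by
      rw [ht0def, ← mul_div_assoc, div_le_iff₀ hden]
      linarith [h6]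
    calc c (i + 1) = (((i+1).choose k : ℝ) * t0) * t0 ^ i := by
          simp only [hcdef, pow_succ]; ring
      _ ≤ (i.choose k : ℝ) * t0 ^ i :=
          mul_le_mul_of_nonneg_right h7 (pow_nonneg ht0.le i)
      _ = c i := rfl
  have up : ∀ j, k ≤ j → j ≤ m → c j ≤ c m := by
    have H : ∀ d : ℕ, ∀ j : ℕ, k ≤ j → j + d = m → c j ≤ c m := by
      intro d
      induction d with
      | zero => intro j h1 h2; have : j = m := by omega
                rw [this]
      | succ d ih =>
          intro j h1 h2
          exact le_trans (step_up j h1 (by omega)) (ih (j+1) (by omega) (by omega))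
    exact fun j hkj hjm => H (m - j) j hkj (by omega)
  have dn : ∀ j, m ≤ j → c j ≤ c m := by
    intro j hj
    induction j, hj using Nat.le_induction with
    | base => exact le_refl _
    | succ n hn ih => exact le_trans (step_dn n hn) ih
  have hbound : ∀ i : ℕ, k ≤ i → c i ≤ c m →
      (i.choose k : ℝ) * t0 ^ (i - k) ≤ (m.choose k : ℝ) * t0 ^ (m - k) := by
    intro i hki hcc
    have hpk : (0:ℝ) < t0 ^ k := pow_pos ht0 k
    have e1 : (i.choose k : ℝ) * t0 ^ (i - k) * t0 ^ k = c i := by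
      rw [mul_assoc, ← pow_add, Nat.sub_add_cancel hki]
    have e2 : (m.choose k : ℝ) * t0 ^ (m - k) * t0 ^ k = c m := by
      rw [mul_assoc, ← pow_add, Nat.sub_add_cancel hk.le]
    rw [← e1, ← e2] at hcc
    exact le_of_mul_le_mul_right hcc hpk
  set M : ℝ := (m.choose k : ℝ) * t0 ^ (m - k) with hMdef
  have hMpos : 0 < M := by
    apply mul_pos _ (pow_pos ht0 _)
    exact_mod_cast Nat.choose_pos hk.le
  have hS1 : ∑ i ∈ Finset.Icc k (m - 1), (i.choose k : ℝ) * t0 ^ (i - k) ≤ (m : ℝ) * M := by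
    have hb : ∀ i ∈ Finset.Icc k (m - 1), (i.choose k : ℝ) * t0 ^ (i - k) ≤ M := by
      intro i hi
      obtain ⟨h1, h2⟩ := Finset.mem_Icc.mp hi
      exact hbound i h1 (up i h1 (by omega))
    calc ∑ i ∈ Finset.Icc k (m - 1), (i.choose k : ℝ) * t0 ^ (i - k)
        ≤ (Finset.Icc k (m - 1)).card • M := Finset.sum_le_card_nsmul _ _ _ hb
      _ = ((Finset.Icc k (m - 1)).card : ℝ) * M := nsmul_eq_mul _ _
      _ ≤ (m : ℝ) * M := by
          apply mul_le_mul_of_nonneg_right _ hMpos.le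
          have : (Finset.Icc k (m - 1)).card ≤ m := by
            rw [Nat.card_Icc]; omega
          exact_mod_cast this
  have hS2 : ∑ i ∈ Finset.Icc (m + 1) (4 * m), (i.choose k : ℝ) * t0 ^ (i - k)
      ≤ (3 * m : ℝ) * M := by
    have hb : ∀ i ∈ Finset.Icc (m + 1) (4 * m), (i.choose k : ℝ) * t0 ^ (i - k) ≤ M := by
      intro i hi
      obtain ⟨h1, h2⟩ := Finset.mem_Icc.mp hi
      exact hbound i (by omega) (dn i (by omega))
    calc ∑ i ∈ Finset.Icc (m + 1) (4 * m), (i.choose k : ℝ) * t0 ^ (i - k)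
        ≤ (Finset.Icc (m + 1) (4 * m)).card • M := Finset.sum_le_card_nsmul _ _ _ hb
      _ = ((Finset.Icc (m + 1) (4 * m)).card : ℝ) * M := nsmul_eq_mul _ _
      _ ≤ (3 * m : ℝ) * M := by
          apply mul_le_mul_of_nonneg_right _ hMpos.le
          have : (Finset.Icc (m + 1) (4 * m)).card ≤ 3 * m := by
            rw [Nat.card_Icc]; omega
          exact_mod_cast this
  have c1 : (0:ℝ) < β / (2 * m) := by positivity
  have c2 : (0:ℝ) < β / (6 * m) := by positivity
  have l1 : (β / (2 * m)) * ∑ i ∈ Finset.Icc k (m - 1), (i.choose k : ℝ) * t0 ^ (i - k)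
      ≤ β * M / 2 := by
    calc (β / (2 * m)) * ∑ i ∈ Finset.Icc k (m - 1), (i.choose k : ℝ) * t0 ^ (i - k)
        ≤ (β / (2 * m)) * ((m : ℝ) * M) := mul_le_mul_of_nonneg_left hS1 c1.le
      _ = β * M / 2 := by field_simp
  have l2 : (β / (6 * m)) * ∑ i ∈ Finset.Icc (m + 1) (4 * m), (i.choose k : ℝ) * t0 ^ (i - k)
      ≤ β * M / 2 := by
    calc (β / (6 * m)) * ∑ i ∈ Finset.Icc (m + 1) (4 * m), (i.choose k : ℝ) * t0 ^ (i - k)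
        ≤ (β / (6 * m)) * ((3 * m : ℝ) * M) := mul_le_mul_of_nonneg_left hS2 c2.le
      _ = β * M / 2 := by field_simp; ring
  have : eqF m k β t0 ≥ M - β * M := by
    unfold eqF
    rw [← hMdef]
    linarith [l1, l2]
  nlinarith [this, hMpos]

lemma eqF_B_neg (m k : ℕ) (hm : 1 ≤ m) (hk : k < m) {β : ℝ} (hβ0 : 0 < β) :
    eqF m k β (1 + 6 * m * (m.choose k) / (β * ((4 * m).choose k))) < 0 := by
  have hmR : (0:ℝ) < m := by exact_mod_cast hm
  have hC : (0:ℝ) < (m.choose k : ℝ) := by exact_mod_cast Nat.choose_pos hk.le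
  have hC4 : (0:ℝ) < ((4 * m).choose k : ℝ) := by
    exact_mod_cast Nat.choose_pos (show k ≤ 4 * m by omega)
  set Q : ℝ := 6 * m * (m.choose k) / (β * ((4 * m).choose k)) with hQdef
  have hQpos : 0 < Q := by positivity
  set B : ℝ := 1 + Q with hBdef
  have hB1 : (1:ℝ) < B := by linarith
  have hBpos : (0:ℝ) < B := by linarith
  have hS1nn : 0 ≤ ∑ i ∈ Finset.Icc k (m - 1), (i.choose k : ℝ) * B ^ (i - k) := by
    apply Finset.sum_nonneg
    intro i _
    positivity
  have hmem : 4 * m ∈ Finset.Icc (m + 1) (4 * m) := Finset.mem_Icc.mpr ⟨by omega, le_refl _⟩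
  have hS2 : ((4 * m).choose k : ℝ) * B ^ (4 * m - k)
      ≤ ∑ i ∈ Finset.Icc (m + 1) (4 * m), (i.choose k : ℝ) * B ^ (i - k) := by
    exact Finset.single_le_sum (f := fun i => (i.choose k : ℝ) * B ^ (i - k))
      (fun i _ => by positivity) hmem
  have hpow : B ^ (4 * m - k) = B ^ (m - k) * B ^ (3 * m) := by
    rw [← pow_add]
    congr 1
    omega
  have hle : B ≤ B ^ (3 * m) := le_self_pow₀ hB1.le (by omega)
  have hident : (β / (6 * m)) * (((4 * m).choose k : ℝ) * Q) = (m.choose k : ℝ) := by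
    rw [hQdef]
    field_simp
  have hkey : (m.choose k : ℝ) < (β / (6 * m)) * (((4 * m).choose k : ℝ) * B) := by
    rw [← hident]
    have : ((4 * m).choose k : ℝ) * Q < ((4 * m).choose k : ℝ) * B := by
      apply mul_lt_mul_of_pos_left _ hC4
      linarith
    apply mul_lt_mul_of_pos_left this
    positivity
  have hmain : (m.choose k : ℝ) * B ^ (m - k)
      < (β / (6 * m)) * (((4 * m).choose k : ℝ) * B ^ (4 * m - k)) := by
    rw [hpow]
    have hpmk : (0:ℝ) < B ^ (m - k) := pow_pos hBpos _
    calc (m.choose k : ℝ) * B ^ (m - k)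
        < ((β / (6 * m)) * (((4 * m).choose k : ℝ) * B)) * B ^ (m - k) :=
          mul_lt_mul_of_pos_right hkey hpmk
      _ ≤ ((β / (6 * m)) * (((4 * m).choose k : ℝ) * B ^ (3 * m))) * B ^ (m - k) := by
          apply mul_le_mul_of_nonneg_right _ hpmk.le
          apply mul_le_mul_of_nonneg_left _ (by positivity)
          exact mul_le_mul_of_nonneg_left hle hC4.le
      _ = (β / (6 * m)) * (((4 * m).choose k : ℝ) * (B ^ (m - k) * B ^ (3 * m))) := by ring
  have c1 : (0:ℝ) ≤ β / (2 * m) := by positivity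
  have c2 : (0:ℝ) < β / (6 * m) := by positivity
  unfold eqF
  have h2 : (β / (6 * m)) * (((4 * m).choose k : ℝ) * B ^ (4 * m - k))
      ≤ (β / (6 * m)) * ∑ i ∈ Finset.Icc (m + 1) (4 * m), (i.choose k : ℝ) * B ^ (i - k) :=
    mul_le_mul_of_nonneg_left hS2 c2.le
  nlinarith [mul_nonneg c1 hS1nn, h2, hmain]

lemma zfun_strictConvexOn (m k : ℕ) (hm : 1 ≤ m) (hk : k < m) {β : ℝ} (hβ0 : 0 < β) :
    StrictConvexOn ℝ (Set.Ioi 0) (Zfun m k β) := by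
  classical
  have hmR : (0:ℝ) < m := by exact_mod_cast hm
  set s : Finset ℕ := Finset.Icc k (m - 1) ∪ Finset.Icc (m + 1) (4 * m) with hsdef
  set w : ℕ → ℝ := fun i => (if i ≤ m - 1 then β / (2 * m) else β / (6 * m)) * (i.choose k : ℝ)
    with hwdef
  set e : ℕ → ℤ := fun i => (i : ℤ) - (m : ℤ) with hedef
  have hdisj : Disjoint (Finset.Icc k (m - 1)) (Finset.Icc (m + 1) (4 * m)) := by
    rw [Finset.disjoint_left]
    intro i hi1 hi2
    have := (Finset.mem_Icc.mp hi1).2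
    have := (Finset.mem_Icc.mp hi2).1
    omega
  have hZrepr : Zfun m k β = fun t : ℝ => ∑ i ∈ s, w i * t ^ (e i) := by
    funext t
    unfold Zfun
    rw [hsdef, Finset.sum_union hdisj, Finset.mul_sum, Finset.mul_sum]
    congr 1
    · refine Finset.sum_congr rfl fun i hi => ?_
      rw [hwdef]
      simp only
      rw [if_pos (Finset.mem_Icc.mp hi).2]
      ring
    · refine Finset.sum_congr rfl fun i hi => ?_
      rw [hwdef]
      simp only
      rw [if_neg (by have := (Finset.mem_Icc.mp hi).1; omega)]
      ring
  rw [hZrepr]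
  apply strictConvexOn_zpow_sum w e s _ k
  · rw [hsdef]
    apply Finset.mem_union_left
    exact Finset.mem_Icc.mpr ⟨le_refl _, by omega⟩
  · rw [hwdef]
    simp only
    rw [if_pos (by omega : k ≤ m - 1), Nat.choose_self]
    push_cast
    positivity
  · rw [hedef]
    simp only
    have : (k:ℤ) < (m:ℤ) := by exact_mod_cast hk
    omega
  · rw [hedef]
    simp only
    have : (k:ℤ) < (m:ℤ) := by exact_mod_cast hk
    omega
  · intro i _
    rw [hwdef]
    simp only
    split
    · positivity
    · positivity

/-- Theorem 1, eq. (9): for `m ≥ 1`, `0 ≤ k ≤ m - 1`, and `β ∈ (0,1)`,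
the equation
`C(m,k) t^{m-k} - (β/(2m)) ∑_{i=k}^{m-1} C(i,k) t^{i-k}
  - (β/(6m)) ∑_{i=m+1}^{4m} C(i,k) t^{i-k} = 0`
has exactly two solutions in `[0, +∞)`. -/
theorem two_nonneg_roots_eq9 (m k : ℕ) (hm : 1 ≤ m) (hk : k ≤ m - 1)
    (β : ℝ) (hβ0 : 0 < β) (hβ1 : β < 1) :
    ({t : ℝ | 0 ≤ t ∧
        (m.choose k : ℝ) * t ^ (m - k)
          - (β / (2 * m)) * ∑ i ∈ Finset.Icc k (m - 1), (i.choose k : ℝ) * t ^ (i - k)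
          - (β / (6 * m)) * ∑ i ∈ Finset.Icc (m + 1) (4 * m), (i.choose k : ℝ) * t ^ (i - k)
          = 0}).ncard = 2 := by
  have hkm : k < m := by omega
  show ({t : ℝ | 0 ≤ t ∧ eqF m k β t = 0}).ncard = 2
  have hkR : (k : ℝ) < m := by exact_mod_cast hkm
  have hmR : (0:ℝ) < m := by exact_mod_cast hm
  set t0 : ℝ := ((m : ℝ) + 1 - k) / ((m : ℝ) + 1) with ht0def
  have ht0pos : 0 < t0 := by
    apply div_pos <;> linarith
  have ht0le1 : t0 ≤ 1 := by
    rw [ht0def, div_le_one (by linarith)]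
    have : (0:ℝ) ≤ k := Nat.cast_nonneg _
    linarith
  set B : ℝ := 1 + 6 * m * (m.choose k) / (β * ((4 * m).choose k)) with hBdef
  have hC : (0:ℝ) < (m.choose k : ℝ) := by exact_mod_cast Nat.choose_pos hkm.le
  have hC4 : (0:ℝ) < ((4 * m).choose k : ℝ) := by
    exact_mod_cast Nat.choose_pos (show k ≤ 4 * m by omega)
  have hB1 : (1:ℝ) < B := by
    rw [hBdef]
    have : (0:ℝ) < 6 * m * (m.choose k) / (β * ((4 * m).choose k)) := by positivity
    linarith
  have hFt0 : 0 < eqF m k β t0 := eqF_t0_pos m k hm hkm hβ0 hβ1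
  have hF0 : eqF m k β 0 < 0 := by
    rw [eqF_zero m k hm hkm β]
    have : (0:ℝ) < β / (2 * m) := by positivity
    linarith
  have hFB : eqF m k β B < 0 := eqF_B_neg m k hm hkm hβ0
  have hcont := continuous_eqF m k β
  -- first root in (0, t0)
  obtain ⟨r₁, hr₁mem, hFr₁⟩ :=
    intermediate_value_Ioo ht0pos.le hcont.continuousOn
      (show (0:ℝ) ∈ Set.Ioo (eqF m k β 0) (eqF m k β t0) from ⟨hF0, hFt0⟩)
  -- second root in (t0, B)
  obtain ⟨r₂, hr₂mem, hFr₂⟩ :=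
    intermediate_value_Ioo' (le_trans ht0le1 hB1.le) hcont.continuousOn
      (show (0:ℝ) ∈ Set.Ioo (eqF m k β B) (eqF m k β t0) from ⟨hFB, hFt0⟩)
  obtain ⟨hr₁0, hr₁t0⟩ := hr₁mem
  obtain ⟨ht0r₂, hr₂B⟩ := hr₂mem
  have hr₁r₂ : r₁ < r₂ := lt_trans hr₁t0 ht0r₂
  have hr₂0 : 0 < r₂ := lt_trans ht0pos ht0r₂
  have hZ := zfun_strictConvexOn m k hm hkm hβ0
  have hzero : ∀ r : ℝ, 0 < r → eqF m k β r = 0 → Zfun m k β r = (m.choose k : ℝ) := by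
    intro r hr h0
    rw [eqF_factor m k hkm β hr] at h0
    rcases mul_eq_zero.mp h0 with h | h
    · exact absurd h (pow_ne_zero _ (ne_of_gt hr))
    · linarith [h]
  have hZr₁ := hzero r₁ hr₁0 hFr₁
  have hZr₂ := hzero r₂ hr₂0 hFr₂
  have hset : {t : ℝ | 0 ≤ t ∧ eqF m k β t = 0} = {r₁, r₂} := by
    ext x
    simp only [Set.mem_setOf_eq, Set.mem_insert_iff, Set.mem_singleton_iff]
    constructor
    · rintro ⟨hx0, hx⟩
      by_contra hcon
      push_neg at hcon
      obtain ⟨hne1, hne2⟩ := hcon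
      have hxpos : 0 < x := by
        rcases hx0.eq_or_lt with h | h
        · exfalso; rw [← h] at hx; rw [hx] at hF0; exact lt_irrefl 0 hF0
        · exact h
      have hZx := hzero x hxpos hx
      rcases lt_trichotomy x r₁ with h | h | h
      · exact no_three_zeros hZ hxpos h hr₁r₂ hZx hZr₁ hZr₂
      · exact hne1 h
      · rcases lt_trichotomy x r₂ with h' | h' | h'
        · exact no_three_zeros hZ hr₁0 h h' hZr₁ hZx hZr₂
        · exact hne2 h'
        · exact no_three_zeros hZ hr₁0 hr₁r₂ h' hZr₁ hZr₂ hZx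
    · rintro (rfl | rfl)
      · exact ⟨hr₁0.le, hFr₁⟩
      · exact ⟨hr₂0.le, hFr₂⟩
  rw [hset]
  exact Set.ncard_pair (ne_of_lt hr₁r₂)
end

section
/- Let d ≥ 1, N_s ≥ 1, 1 ≤ k ≤ N_s, let P ⊆ ℝ^d, let α : Fin N_s → ℝ^d, fix j ∈ Fin N_s, and let G ∈ ℝ satisfy ⟪α_i, u⟫ − ⟪α_j, u⟫ ≤ G for all u ∈ P and all i. Then the following are equivalent: (i) there exist u ∈ P and z : Fin N_s → {0,1} such that ⟪α_j, u⟫ ≥ ⟪α_i, u⟫ − G(1 − z_i) for every i ≠ j and Σ_{i ≠ j} z_i ≥ N_s − k; (ii) there exists u ∈ P such that ⟪α_j, u⟫ is among the k largest values of the tuple (⟪α_1, u⟫, …, ⟪α_{N_s}, u⟫), i.e., ⟪α_j, u⟫ ≥ the k-th largest of these values. -/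
open Finset

lemma antitone_sortedDesc' {N : ℕ} (L : Fin N → ℝ) : Antitone (fun j : Fin N => L (Tuple.sort L j.rev)) := by
  intro a b hab
  exact Tuple.monotone_sort L (Fin.rev_le_rev.mpr hab)

lemma card_gt_sorted {N : ℕ} (L : Fin N → ℝ) (c : ℝ) :
    (univ.filter fun p : Fin N => c < L (Tuple.sort L p.rev)).card
      = (univ.filter fun i => c < L i).card := by
  apply Finset.card_bij (fun p _ => Tuple.sort L p.rev)
  · intro p hp
    simp only [mem_filter, mem_univ, true_and] at hp ⊢
    exact hp
  · intro p hp q hq h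
    have := (Tuple.sort L).injective h
    exact Fin.rev_injective this
  · intro i hi
    refine ⟨((Tuple.sort L).symm i).rev, ?_, by simp⟩
    simp only [mem_filter, mem_univ, true_and, Fin.rev_rev, Equiv.apply_symm_apply] at hi ⊢
    exact hi

lemma sorted_le_iff {N : ℕ} (L : Fin N → ℝ) (c : ℝ) (m : ℕ) (hm : m < N) :
    L (Tuple.sort L (Fin.rev ⟨m, hm⟩)) ≤ c ↔
      (univ.filter fun i => c < L i).card ≤ m := by
  rw [← card_gt_sorted L c]
  constructor
  · intro h
    calc (univ.filter fun p : Fin N => c < L (Tuple.sort L p.rev)).card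
        ≤ (Finset.range m).card := by
          apply Finset.card_le_card_of_injOn (fun p : Fin N => (p : ℕ))
          · intro p hp
            simp only [mem_coe, mem_filter, mem_univ, true_and] at hp
            simp only [Finset.mem_coe, Finset.mem_range]
            by_contra hc
            push_neg at hc
            have : L (Tuple.sort L p.rev) ≤ L (Tuple.sort L (Fin.rev ⟨m, hm⟩)) :=
              antitone_sortedDesc' L (show (⟨m, hm⟩ : Fin N) ≤ p from hc)
            linarith
          · intro p _ q _ h
            exact Fin.ext h
      _ = m := by simp
  · intro h
    by_contra hc
    push_neg at hc
    have hsub : ∀ p : Fin N, p.val ≤ m → c < L (Tuple.sort L p.rev) := by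
      intro p hp
      exact lt_of_lt_of_le hc (antitone_sortedDesc' L (show p ≤ ⟨m, hm⟩ from hp))
    have h2 : (Finset.univ : Finset (Fin (m+1))).card ≤
        (univ.filter fun p : Fin N => c < L (Tuple.sort L p.rev)).card := by
      apply Finset.card_le_card_of_injOn (fun i : Fin (m+1) => (Fin.castLE hm i : Fin N))
      · intro i _
        simp only [mem_coe, mem_filter, mem_univ, true_and]
        exact hsub (Fin.castLE hm i) (Nat.lt_succ_iff.mp i.isLt)
      · intro i _ q _ h
        exact Fin.castLE_injective hm h
    simp only [Finset.card_univ, Fintype.card_fin] at h2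
    omega

/-- correctness of the big-M MIP (18): suppose `G` bounds
`⟪α i, u⟫ - ⟪α j, u⟫` over all `u ∈ P` and all `i`. Then the MIP constraints are
feasible for index `j` iff there exists `u ∈ P` such that `⟪α j, u⟫` is among the `k`
largest values of `(⟪α 1, u⟫, …, ⟪α Ns, u⟫)`. -/
theorem bigM_MIP_feasible_iff_support (d Ns k : ℕ) (hd : 1 ≤ d) (hNs : 1 ≤ Ns)
    (hk1 : 1 ≤ k) (hkNs : k ≤ Ns)
    (P : Set (EuclideanSpace ℝ (Fin d))) (α : Fin Ns → EuclideanSpace ℝ (Fin d))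
    (j : Fin Ns) (G : ℝ)
    (hG : ∀ u ∈ P, ∀ i : Fin Ns, (inner ℝ (α i) u : ℝ) - (inner ℝ (α j) u : ℝ) ≤ G) :
    ((∃ u ∈ P, ∃ z : Fin Ns → ℝ, (∀ i, z i = 0 ∨ z i = 1) ∧
        (∀ i, i ≠ j → (inner ℝ (α j) u : ℝ) ≥ (inner ℝ (α i) u : ℝ) - G * (1 - z i)) ∧
        ((Ns : ℝ) - k ≤ ∑ i ∈ Finset.univ.erase j, z i)) ↔
      (∃ u ∈ P,
        (inner ℝ (α j) u : ℝ) ≥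
          kthLargest (fun i : Fin Ns => (inner ℝ (α i) u : ℝ)) k (by omega))) := by
  have hm : k - 1 < Ns := by omega
  constructor
  · rintro ⟨u, hu, z, hz01, hcon, hsum⟩
    refine ⟨u, hu, ?_⟩
    set L : Fin Ns → ℝ := fun i => (inner ℝ (α i) u : ℝ) with hLdef
    rw [ge_iff_le,
      show kthLargest L k (by omega) = L (Tuple.sort L (Fin.rev ⟨k - 1, hm⟩)) from rfl,
      sorted_le_iff L (L j) (k - 1) hm]
    classical
    set S := (Finset.univ.erase j).filter (fun i => z i = 1) with hS
    have hsum' : ∑ i ∈ Finset.univ.erase j, z i = S.card := by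
      rw [← Finset.sum_filter_add_sum_filter_not (Finset.univ.erase j) (fun i => z i = 1)]
      have h1 : ∑ i ∈ S, z i = S.card := by
        rw [Finset.sum_congr rfl (fun i hi => (Finset.mem_filter.mp hi).2)]
        simp
        rfl
      have h2 : ∑ i ∈ (Finset.univ.erase j).filter (fun i => ¬ z i = 1), z i = 0 := by
        apply Finset.sum_eq_zero
        intro i hi
        rcases hz01 i with h | h
        · exact h
        · exact absurd h (Finset.mem_filter.mp hi).2
      rw [h1, h2, add_zero]
    have hScard : Ns - k ≤ S.card := by
      rw [hsum'] at hsum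
      have h3 : (Ns : ℝ) ≤ (S.card : ℝ) + k := by linarith
      have h4 : Ns ≤ S.card + k := by exact_mod_cast h3
      omega
    have hjS : j ∉ S := fun h => (Finset.mem_erase.mp (Finset.mem_filter.mp h).1).1 rfl
    have hsub : (Finset.univ.filter fun i => L j < L i) ⊆ Finset.univ \ insert j S := by
      intro i hi
      simp only [Finset.mem_filter, Finset.mem_univ, true_and] at hi
      simp only [Finset.mem_sdiff, Finset.mem_univ, true_and, Finset.mem_insert, not_or]
      refine ⟨fun h => by subst h; exact lt_irrefl _ hi, fun hiS => ?_⟩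
      have hij : i ≠ j := (Finset.mem_erase.mp (Finset.mem_filter.mp hiS).1).1
      have hz1 : z i = 1 := (Finset.mem_filter.mp hiS).2
      have hc := hcon i hij
      rw [hz1] at hc
      simp only [sub_self, mul_zero, sub_zero] at hc
      exact absurd hi (not_lt.mpr hc)
    have hcard := Finset.card_le_card hsub
    rw [Finset.card_sdiff_of_subset (Finset.subset_univ _), Finset.card_univ, Fintype.card_fin,
      Finset.card_insert_of_notMem hjS] at hcard
    have hS1 : S.card ≤ Ns - 1 := by
      have h9 := Finset.card_le_card (Finset.filter_subset (fun i => z i = 1) (Finset.univ.erase j))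
      rw [Finset.card_erase_of_mem (Finset.mem_univ j), Finset.card_univ, Fintype.card_fin] at h9
      exact h9
    omega
  · rintro ⟨u, hu, hge⟩
    classical
    set L : Fin Ns → ℝ := fun i => (inner ℝ (α i) u : ℝ) with hLdef
    have hcard : (Finset.univ.filter fun i => L j < L i).card ≤ k - 1 :=
      (sorted_le_iff L (L j) (k - 1) hm).mp hge
    refine ⟨u, hu, fun i => if L i ≤ L j then 1 else 0, ?_, ?_, ?_⟩
    · intro i
      by_cases h : L i ≤ L j <;> simp [h]
    · intro i hij
      show L j ≥ L i - G * (1 - if L i ≤ L j then (1:ℝ) else 0)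
      by_cases h : L i ≤ L j
      · rw [if_pos h]
        simp only [sub_self, mul_zero, sub_zero]
        exact h
      · rw [if_neg h]
        push_neg at h
        have hGi : L i - L j ≤ G := hG u hu i
        simp only [sub_zero, mul_one]
        linarith
    · rw [Finset.sum_boole]
      have hpart := Finset.card_filter_add_card_filter_not
        (s := Finset.univ.erase j) (p := fun i => L i ≤ L j)
      rw [Finset.card_erase_of_mem (Finset.mem_univ j), Finset.card_univ, Fintype.card_fin]
        at hpart
      have hsub2 : (Finset.univ.erase j).filter (fun i => ¬ L i ≤ L j) ⊆
          Finset.univ.filter fun i => L j < L i := by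
        intro i hi
        simp only [Finset.mem_filter, Finset.mem_erase, Finset.mem_univ, true_and,
          not_le] at hi ⊢
        exact hi.2
      have h5 := Finset.card_le_card hsub2
      have h6 : Ns - k ≤ ((Finset.univ.erase j).filter (fun i => L i ≤ L j)).card := by omega
      have h7 : Ns ≤ ((Finset.univ.erase j).filter (fun i => L i ≤ L j)).card + k := by omega
      have h8 : (Ns : ℝ) ≤ (((Finset.univ.erase j).filter (fun i => L i ≤ L j)).card : ℝ) + k :=
        by exact_mod_cast h7
      linarith
end
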